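/- Let γ > 0, c > 0, let u : (0,∞) → (0,∞) be such that ψ(z) = log u(e^z) is strictly increasing and convex on ℝ, and let η : [0,∞) → ℝ satisfy η(1) = −1 and η(z) ≥ −z^{1+γ} for all z ≥ 0. Define the composite scoring rule S(g,f) = η(u(c·⟨g f^γ⟩)/u(c·⟨f^{1+γ}⟩)) · u(c·⟨f^{1+γ}⟩) for g, f ∈ F_γ with ⟨g f^γ⟩ > 0. Then: (1) S(g,f) ≥ S(g,g) = −u(c·⟨g^{1+γ}⟩) for all such g, f ∈ F_γ; and (2) for probability densities q, p ∈ F_γ (⟨q⟩ = ⟨p⟩ = 1) with ⟨q p^γ⟩ > 0, equality S(q,p) = S(q,q) holds if and only if q = p ν-almost everywhere. -/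

import Mathlib

open MeasureTheory

/-- Membership in the class `F_γ`: measurable, not a.e. zero, with `⟨g^{1+γ}⟩ < ∞`. -/
def MemF {X : Type*} [MeasurableSpace X] (ν : Measure X) (γ : ℝ) (g : X → NNReal) : Prop :=
  Measurable g ∧ ¬ (g =ᵐ[ν] 0) ∧ (∫⁻ x, (g x : ENNReal) ^ (1 + γ) ∂ν) ≠ ⊤

/-- The composite scoring rule
`S(g,f) = η(u(c⟨g f^γ⟩)/u(c⟨f^{1+γ}⟩)) ⬝ u(c⟨f^{1+γ}⟩)`. -/
noncomputable def compositeScore {X : Type*} [MeasurableSpace X] (ν : Measure X)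
    (γ c : ℝ) (η u : ℝ → ℝ) (g f : X → NNReal) : ℝ :=
  η (u (c * (∫⁻ x, (g x : ENNReal) * (f x : ENNReal) ^ γ ∂ν).toReal) /
      u (c * (∫⁻ x, (f x : ENNReal) ^ (1 + γ) ∂ν).toReal)) *
    u (c * (∫⁻ x, (f x : ENNReal) ^ (1 + γ) ∂ν).toReal)

open scoped ENNReal NNReal
/-- Strict two-point AM-GM equality case over ℝ. -/
lemma real_amgm_eq {w w' a b : ℝ} (hw : 0 < w) (hw' : 0 < w') (hww : w + w' = 1)
    (ha : 0 ≤ a) (hb : 0 ≤ b) (h : a ^ w * b ^ w' = w * a + w' * b) : a = b := by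
  by_contra hne
  have hlt : a ^ w * b ^ w' < w * a + w' * b := by
    rcases eq_or_lt_of_le ha with ha0 | ha0
    · rcases eq_or_lt_of_le hb with hb0 | hb0
      · exact absurd (ha0.symm.trans hb0) hne
      · rw [← ha0, Real.zero_rpow hw.ne']
        nlinarith
    · rcases eq_or_lt_of_le hb with hb0 | hb0
      · rw [← hb0, Real.zero_rpow hw'.ne']
        nlinarith
      · have hcc := strictConcaveOn_log_Ioi.2 (Set.mem_Ioi.2 ha0) (Set.mem_Ioi.2 hb0)
          hne hw hw' hww
        simp only [smul_eq_mul] at hcc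
        have hl : Real.log (a ^ w * b ^ w') < Real.log (w * a + w' * b) := by
          rw [Real.log_mul (by positivity) (by positivity), Real.log_rpow ha0,
            Real.log_rpow hb0]
          exact hcc
        have hpos : 0 < a ^ w * b ^ w' := by positivity
        calc a ^ w * b ^ w' = Real.exp (Real.log (a ^ w * b ^ w')) := (Real.exp_log hpos).symm
          _ < Real.exp (Real.log (w * a + w' * b)) := Real.exp_lt_exp.2 hl
          _ = w * a + w' * b := Real.exp_log (by nlinarith)
  exact absurd h hlt.ne
lemma ennreal_amgm {a b : ℝ≥0∞} {w w' : ℝ} (hw : 0 ≤ w) (hw' : 0 ≤ w') (hww : w + w' = 1)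
    (ha : a ≠ ⊤) (hb : b ≠ ⊤) :
    a ^ w * b ^ w' ≤ ENNReal.ofReal w * a + ENNReal.ofReal w' * b := by
  lift a to NNReal using ha
  lift b to NNReal using hb
  have key := NNReal.geom_mean_le_arith_mean2_weighted w.toNNReal w'.toNNReal a b
    (by ext; push_cast; rw [Real.coe_toNNReal _ hw, Real.coe_toNNReal _ hw']; exact hww)
  rw [Real.coe_toNNReal _ hw, Real.coe_toNNReal _ hw'] at key
  calc (a : ℝ≥0∞) ^ w * (b : ℝ≥0∞) ^ w'
      = ((a ^ w * b ^ w' : NNReal) : ℝ≥0∞) := by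
        rw [ENNReal.coe_mul, ENNReal.coe_rpow_of_nonneg _ hw, ENNReal.coe_rpow_of_nonneg _ hw']
    _ ≤ ((w.toNNReal * a + w'.toNNReal * b : NNReal) : ℝ≥0∞) := ENNReal.coe_le_coe.2 key
    _ = ENNReal.ofReal w * a + ENNReal.ofReal w' * b := by
        rw [ENNReal.coe_add, ENNReal.coe_mul, ENNReal.coe_mul, ENNReal.ofReal, ENNReal.ofReal]

lemma ennreal_amgm_eq {a b : ℝ≥0∞} {w w' : ℝ} (hw : 0 < w) (hw' : 0 < w') (hww : w + w' = 1)
    (ha : a ≠ ⊤) (hb : b ≠ ⊤)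
    (h : a ^ w * b ^ w' = ENNReal.ofReal w * a + ENNReal.ofReal w' * b) : a = b := by
  have htr : a.toReal ^ w * b.toReal ^ w' = w * a.toReal + w' * b.toReal := by
    have := congrArg ENNReal.toReal h
    rw [ENNReal.toReal_mul, ← ENNReal.toReal_rpow, ← ENNReal.toReal_rpow,
      ENNReal.toReal_add (by finiteness) (by finiteness), ENNReal.toReal_mul,
      ENNReal.toReal_mul, ENNReal.toReal_ofReal hw.le, ENNReal.toReal_ofReal hw'.le] at this
    exact this
  have := real_amgm_eq hw hw' hww ENNReal.toReal_nonneg ENNReal.toReal_nonneg htr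
  exact (ENNReal.toReal_eq_toReal_iff' ha hb).1 this

lemma score_core (γ c : ℝ) (hγ : 0 < γ) (hc : 0 < c)
    (u : ℝ → ℝ) (hupos : ∀ z : ℝ, 0 < z → 0 < u z)
    (hψm : StrictMono (fun z : ℝ => Real.log (u (Real.exp z))))
    (hψc : ConvexOn ℝ Set.univ (fun z : ℝ => Real.log (u (Real.exp z))))
    (η : ℝ → ℝ) (hη : ∀ z : ℝ, 0 ≤ z → η z ≥ -z ^ (1 + γ))
    {A B G : ℝ} (hA : 0 < A) (hB : 0 < B) (hG : 0 < G)
    (hH : A ≤ G ^ (1/(1+γ)) * B ^ (γ/(1+γ))) :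
    -(u (c*G)) ≤ η (u (c*A) / u (c*B)) * u (c*B) ∧
    (η (u (c*A) / u (c*B)) * u (c*B) = -(u (c*G)) →
      A = G ^ (1/(1+γ)) * B ^ (γ/(1+γ))) := by
  have h1γ : (0:ℝ) < 1 + γ := by linarith
  set w : ℝ := 1/(1+γ) with hw_def
  set w' : ℝ := γ/(1+γ) with hw'_def
  have hw : 0 < w := by rw [hw_def]; positivity
  have hw' : 0 < w' := by rw [hw'_def]; positivity
  have hww : w + w' = 1 := by rw [hw_def, hw'_def]; field_simp
  have hcA : 0 < c * A := by positivity
  have hcB : 0 < c * B := by positivity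
  have hcG : 0 < c * G := by positivity
  have huA := hupos _ hcA
  have huB := hupos _ hcB
  have huG := hupos _ hcG
  set ψ : ℝ → ℝ := fun z => Real.log (u (Real.exp z)) with hψ_def
  have hψ_log : ∀ x : ℝ, 0 < x → ψ (Real.log x) = Real.log (u x) := fun x hx => by
    simp [hψ_def, Real.exp_log hx]
  have hcw : c ^ w * c ^ w' = c := by
    rw [← Real.rpow_add hc, hww, Real.rpow_one]
  have hprod : ∀ S T : ℝ, 0 ≤ S → 0 ≤ T →
      (c*S) ^ w * (c*T) ^ w' = c * (S ^ w * T ^ w') := by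
    intro S T hS hT
    rw [Real.mul_rpow hc.le hS, Real.mul_rpow hc.le hT]
    calc c ^ w * S ^ w * (c ^ w' * T ^ w') = (c ^ w * c ^ w') * (S ^ w * T ^ w') := by ring
      _ = c * (S ^ w * T ^ w') := by rw [hcw]
  -- step 1 : c*A ≤ (c*G)^w * (c*B)^w'
  have h1 : c * A ≤ (c*G) ^ w * (c*B) ^ w' := by
    rw [hprod _ _ hG.le hB.le]
    exact mul_le_mul_of_nonneg_left hH hc.le
  -- step 2 : log combination
  have h2 : Real.log (c*A) ≤ w * Real.log (c*G) + w' * Real.log (c*B) := by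
    calc Real.log (c*A) ≤ Real.log ((c*G) ^ w * (c*B) ^ w') := Real.log_le_log hcA h1
      _ = w * Real.log (c*G) + w' * Real.log (c*B) := by
          rw [Real.log_mul (by positivity) (by positivity), Real.log_rpow hcG,
            Real.log_rpow hcB]
  have h3 : ψ (Real.log (c*A)) ≤ ψ (w * Real.log (c*G) + w' * Real.log (c*B)) :=
    hψm.monotone h2
  have h4 : ψ (w * Real.log (c*G) + w' * Real.log (c*B)) ≤
      w * ψ (Real.log (c*G)) + w' * ψ (Real.log (c*B)) := by
    have := hψc.2 (Set.mem_univ (Real.log (c*G))) (Set.mem_univ (Real.log (c*B)))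
      hw.le hw'.le hww
    simpa [smul_eq_mul] using this
  have hL : Real.log (u (c*A)) ≤ w * Real.log (u (c*G)) + w' * Real.log (u (c*B)) := by
    rw [← hψ_log _ hcA, ← hψ_log _ hcG, ← hψ_log _ hcB]
    exact h3.trans h4
  have ecomb : ∀ LG LB : ℝ, (1+γ) * (w * LG + w' * LB) = LG + LB * γ := by
    intro LG LB
    rw [hw_def, hw'_def]
    field_simp
  -- u(cA)^(1+γ) ≤ u(cG) * u(cB)^γ
  have h5 : Real.log (u (c*A)) * (1+γ) ≤ Real.log (u (c*G)) + Real.log (u (c*B)) * γ := by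
    have h6 := mul_le_mul_of_nonneg_left hL h1γ.le
    rw [ecomb] at h6
    linarith
  have hexp_ineq : u (c*A) ^ (1+γ) ≤ u (c*G) * u (c*B) ^ γ := by
    rw [Real.rpow_def_of_pos huA, Real.rpow_def_of_pos huB,
      ← Real.exp_log huG, ← Real.exp_add]
    exact Real.exp_le_exp.2 h5
  set z : ℝ := u (c*A) / u (c*B) with hz_def
  have hz : 0 < z := by positivity
  have hηz := hη z hz.le
  have hBpow : u (c*B) ^ (1+γ) = u (c*B) ^ γ * u (c*B) := by
    rw [Real.rpow_add huB, Real.rpow_one, mul_comm]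
  have key : z ^ (1+γ) * u (c*B) = u (c*A) ^ (1+γ) / u (c*B) ^ γ := by
    rw [hz_def, Real.div_rpow huA.le huB.le, hBpow]
    have hγB : (0:ℝ) < u (c*B) ^ γ := by positivity
    field_simp
  have hdiv_le : u (c*A) ^ (1+γ) / u (c*B) ^ γ ≤ u (c*G) := by
    rw [div_le_iff₀ (by positivity)]
    linarith [hexp_ineq]
  have hmain : -(u (c*G)) ≤ η z * u (c*B) := by
    have step1 : -(z ^ (1+γ)) * u (c*B) ≤ η z * u (c*B) :=
      mul_le_mul_of_nonneg_right hηz huB.le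
    have step2 : -(u (c*G)) ≤ -(z ^ (1+γ)) * u (c*B) := by
      rw [neg_mul, key]; linarith
    linarith
  refine ⟨hmain, fun heq => ?_⟩
  -- equality case
  have step1 : -(z ^ (1+γ)) * u (c*B) ≤ η z * u (c*B) :=
    mul_le_mul_of_nonneg_right hηz huB.le
  have heq2 : z ^ (1+γ) * u (c*B) = u (c*G) := by
    have hle : -(u (c*G)) ≤ -(z ^ (1+γ)) * u (c*B) := by
      rw [neg_mul, key]; linarith [hdiv_le]
    have hge : -(z ^ (1+γ)) * u (c*B) ≤ -(u (c*G)) := heq ▸ step1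
    have h := le_antisymm hge hle
    rw [neg_mul] at h
    linarith
  have heq3 : u (c*A) ^ (1+γ) = u (c*G) * u (c*B) ^ γ := by
    rw [key] at heq2
    have hγB : (0:ℝ) < u (c*B) ^ γ := by positivity
    field_simp at heq2
    linarith
  have heq4 : Real.log (u (c*A)) * (1+γ) = Real.log (u (c*G)) + Real.log (u (c*B)) * γ := by
    have := heq3
    rw [Real.rpow_def_of_pos huA, Real.rpow_def_of_pos huB,
      ← Real.exp_log huG, ← Real.exp_add] at this
    exact Real.exp_injective this
  have heqL : Real.log (u (c*A)) = w * Real.log (u (c*G)) + w' * Real.log (u (c*B)) := by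
    have hcomb := ecomb (Real.log (u (c*G))) (Real.log (u (c*B)))
    have h' : (1+γ) * Real.log (u (c*A)) =
        (1+γ) * (w * Real.log (u (c*G)) + w' * Real.log (u (c*B))) := by linarith
    exact mul_left_cancel₀ h1γ.ne' h'
  -- squeeze in the ψ chain
  have hψeq : ψ (Real.log (c*A)) = ψ (w * Real.log (c*G) + w' * Real.log (c*B)) := by
    apply le_antisymm h3
    have hAe : ψ (Real.log (c*A)) = w * ψ (Real.log (c*G)) + w' * ψ (Real.log (c*B)) := by
      rw [hψ_log _ hcA, hψ_log _ hcG, hψ_log _ hcB]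
      exact heqL
    linarith [h4, hAe]
  have hlogeq : Real.log (c*A) = w * Real.log (c*G) + w' * Real.log (c*B) :=
    hψm.injective hψeq
  have hcAeq : c * A = (c*G) ^ w * (c*B) ^ w' := by
    have : c * A = Real.exp (Real.log (c*A)) := (Real.exp_log hcA).symm
    rw [this, hlogeq, Real.exp_add,
      ← Real.log_rpow hcG, ← Real.log_rpow hcB, Real.exp_log (by positivity),
      Real.exp_log (by positivity)]
  rw [hprod _ _ hG.le hB.le] at hcAeq
  exact mul_left_cancel₀ hc.ne' hcAeq

lemma lintegral_pow_ne_zero {X : Type*} [MeasurableSpace X] {ν : Measure X} {γ : ℝ}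
    (hγ : 0 < γ) {g : X → ℝ≥0} (hgm : Measurable g) (hg2 : ¬ (g =ᵐ[ν] 0)) :
    (∫⁻ x, (g x : ℝ≥0∞) ^ (1+γ) ∂ν) ≠ 0 := by
  intro h
  rw [lintegral_eq_zero_iff (hgm.coe_nnreal_ennreal.pow_const _)] at h
  apply hg2
  refine h.mono fun x hx => ?_
  simp only [Pi.zero_apply] at hx ⊢
  rcases ENNReal.rpow_eq_zero_iff.1 hx with ⟨h0, _⟩ | ⟨h0, _⟩
  · exact_mod_cast h0
  · exact absurd h0 (by simp)

lemma lintegral_holder {X : Type*} [MeasurableSpace X] {ν : Measure X} {γ : ℝ}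
    (hγ : 0 < γ) {g f : X → ℝ≥0} (hgm : Measurable g) (hfm : Measurable f) :
    (∫⁻ x, (g x : ℝ≥0∞) * (f x : ℝ≥0∞) ^ γ ∂ν) ≤
      (∫⁻ x, (g x : ℝ≥0∞) ^ (1+γ) ∂ν) ^ (1/(1+γ)) *
      (∫⁻ x, (f x : ℝ≥0∞) ^ (1+γ) ∂ν) ^ (γ/(1+γ)) := by
  have hpq : Real.HolderConjugate (1+γ) ((1+γ)/γ) := by
    refine Real.holderConjugate_iff.mpr ⟨?_, ?_⟩
    · linarith
    · rw [inv_div]; field_simp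
  have holder := ENNReal.lintegral_mul_le_Lp_mul_Lq ν hpq
    hgm.coe_nnreal_ennreal.aemeasurable
    ((hfm.coe_nnreal_ennreal.pow_const γ).aemeasurable)
  simp only [Pi.mul_apply] at holder
  have hrw : ∀ x, ((f x : ℝ≥0∞) ^ γ) ^ ((1+γ)/γ) = (f x : ℝ≥0∞) ^ (1+γ) := by
    intro x
    rw [← ENNReal.rpow_mul]
    congr 1
    field_simp
  have h1q : 1/((1+γ)/γ) = γ/(1+γ) := one_div_div _ _
  simp only [hrw, h1q] at holder
  exact holder

lemma hsplit_pow {γ : ℝ} (hγ : 0 < γ) (y : ℝ≥0) :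
    (y : ℝ≥0∞) * (y : ℝ≥0∞) ^ γ = (y : ℝ≥0∞) ^ (1 + γ) := by
  rcases eq_or_ne y 0 with h | h
  · simp [h, ENNReal.zero_rpow_of_pos hγ,
      ENNReal.zero_rpow_of_pos (by linarith : (0:ℝ) < 1 + γ)]
  · rw [ENNReal.rpow_add 1 γ (by exact_mod_cast h) ENNReal.coe_ne_top, ENNReal.rpow_one]

lemma score_ineq {X : Type*} [MeasurableSpace X] (ν : Measure X)
    (γ c : ℝ) (hγ : 0 < γ) (hc : 0 < c)
    (u : ℝ → ℝ) (hupos : ∀ z : ℝ, 0 < z → 0 < u z)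
    (hψm : StrictMono (fun z : ℝ => Real.log (u (Real.exp z))))
    (hψc : ConvexOn ℝ Set.univ (fun z : ℝ => Real.log (u (Real.exp z))))
    (η : ℝ → ℝ) (hη1 : η 1 = -1) (hη : ∀ z : ℝ, 0 ≤ z → η z ≥ -z ^ (1 + γ))
    {g f : X → ℝ≥0} (hg : MemF ν γ g) (hf : MemF ν γ f)
    (hA0 : (∫⁻ x, (g x : ℝ≥0∞) * (f x : ℝ≥0∞) ^ γ ∂ν) ≠ 0) :
    compositeScore ν γ c η u g g
        = -(u (c * (∫⁻ x, (g x : ℝ≥0∞) ^ (1 + γ) ∂ν).toReal)) ∧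
    compositeScore ν γ c η u g f ≥ compositeScore ν γ c η u g g ∧
    (compositeScore ν γ c η u g f = compositeScore ν γ c η u g g →
      (∫⁻ x, (g x : ℝ≥0∞) * (f x : ℝ≥0∞) ^ γ ∂ν).toReal =
        (∫⁻ x, (g x : ℝ≥0∞) ^ (1 + γ) ∂ν).toReal ^ (1/(1+γ)) *
        (∫⁻ x, (f x : ℝ≥0∞) ^ (1 + γ) ∂ν).toReal ^ (γ/(1+γ))) := by
  obtain ⟨hgm, hg2, hgtop⟩ := hg
  obtain ⟨hfm, hf2, hftop⟩ := hf
  have h1γ : (0:ℝ) < 1 + γ := by linarith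
  set Ae := ∫⁻ x, (g x : ℝ≥0∞) * (f x : ℝ≥0∞) ^ γ ∂ν with hAe_def
  set Be := ∫⁻ x, (f x : ℝ≥0∞) ^ (1 + γ) ∂ν with hBe_def
  set Ge := ∫⁻ x, (g x : ℝ≥0∞) ^ (1 + γ) ∂ν with hGe_def
  have hBe0 : Be ≠ 0 := lintegral_pow_ne_zero hγ hfm hf2
  have hGe0 : Ge ≠ 0 := lintegral_pow_ne_zero hγ hgm hg2
  have hHolder : Ae ≤ Ge ^ (1/(1+γ)) * Be ^ (γ/(1+γ)) := lintegral_holder hγ hgm hfm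
  have hAetop : Ae ≠ ⊤ :=
    ne_top_of_le_ne_top (ENNReal.mul_ne_top
      (ENNReal.rpow_ne_top_of_nonneg (by positivity) hgtop)
      (ENNReal.rpow_ne_top_of_nonneg (by positivity) hftop)) hHolder
  have hA : 0 < Ae.toReal := ENNReal.toReal_pos hA0 hAetop
  have hB : 0 < Be.toReal := ENNReal.toReal_pos hBe0 hftop
  have hG : 0 < Ge.toReal := ENNReal.toReal_pos hGe0 hgtop
  have hH : Ae.toReal ≤ Ge.toReal ^ (1/(1+γ)) * Be.toReal ^ (γ/(1+γ)) := by
    have := ENNReal.toReal_mono (ENNReal.mul_ne_top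
      (ENNReal.rpow_ne_top_of_nonneg (by positivity) hgtop)
      (ENNReal.rpow_ne_top_of_nonneg (by positivity) hftop)) hHolder
    rwa [ENNReal.toReal_mul, ← ENNReal.toReal_rpow, ← ENNReal.toReal_rpow] at this
  have hcore := score_core γ c hγ hc u hupos hψm hψc η hη hA hB hG hH
  have hGG : (∫⁻ x, (g x : ℝ≥0∞) * (g x : ℝ≥0∞) ^ γ ∂ν) = Ge :=
    lintegral_congr fun x => hsplit_pow hγ (g x)
  have hSgg : compositeScore ν γ c η u g g = -(u (c * Ge.toReal)) := by
    rw [compositeScore, hGG]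
    rw [div_self (hupos _ (by positivity)).ne', hη1]
    ring
  have hSgf : compositeScore ν γ c η u g f =
      η (u (c * Ae.toReal) / u (c * Be.toReal)) * u (c * Be.toReal) := rfl
  refine ⟨hSgg, ?_, ?_⟩
  · rw [hSgg, hSgf, ge_iff_le]
    exact hcore.1
  · intro hEq
    rw [hSgg, hSgf] at hEq
    exact hcore.2 hEq
lemma holder_eq_ae {X : Type*} [MeasurableSpace X] {ν : Measure X} {γ : ℝ} (hγ : 0 < γ)
    {q p : X → ℝ≥0} (hqm : Measurable q) (hpm : Measurable p)
    (hq2 : ¬ (q =ᵐ[ν] 0)) (hp2 : ¬ (p =ᵐ[ν] 0))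
    (hqtop : (∫⁻ x, (q x : ℝ≥0∞) ^ (1+γ) ∂ν) ≠ ⊤)
    (hptop : (∫⁻ x, (p x : ℝ≥0∞) ^ (1+γ) ∂ν) ≠ ⊤)
    (hq1 : (∫⁻ x, (q x : ℝ≥0∞) ∂ν) = 1) (hp1 : (∫⁻ x, (p x : ℝ≥0∞) ∂ν) = 1)
    (hAtop : (∫⁻ x, (q x : ℝ≥0∞) * (p x : ℝ≥0∞) ^ γ ∂ν) ≠ ⊤)
    (heq : (∫⁻ x, (q x : ℝ≥0∞) * (p x : ℝ≥0∞) ^ γ ∂ν).toReal =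
      (∫⁻ x, (q x : ℝ≥0∞) ^ (1+γ) ∂ν).toReal ^ (1/(1+γ)) *
      (∫⁻ x, (p x : ℝ≥0∞) ^ (1+γ) ∂ν).toReal ^ (γ/(1+γ))) : q =ᵐ[ν] p := by
  have h1γ : (0:ℝ) < 1 + γ := by linarith
  set w : ℝ := 1/(1+γ) with hw_def
  set w' : ℝ := γ/(1+γ) with hw'_def
  have hw : 0 < w := by rw [hw_def]; positivity
  have hw' : 0 < w' := by rw [hw'_def]; positivity
  have hww : w + w' = 1 := by rw [hw_def, hw'_def]; field_simp
  have hmul_w : (1+γ) * w = 1 := by rw [hw_def]; field_simp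
  have hmul_w' : (1+γ) * w' = γ := by rw [hw'_def]; field_simp
  set Ae := ∫⁻ x, (q x : ℝ≥0∞) * (p x : ℝ≥0∞) ^ γ ∂ν with hAe_def
  set Ge := ∫⁻ x, (q x : ℝ≥0∞) ^ (1 + γ) ∂ν with hGe_def
  set Be := ∫⁻ x, (p x : ℝ≥0∞) ^ (1 + γ) ∂ν with hBe_def
  have hGe0 : Ge ≠ 0 := lintegral_pow_ne_zero hγ hqm hq2
  have hBe0 : Be ≠ 0 := lintegral_pow_ne_zero hγ hpm hp2
  set k := Ge ^ w * Be ^ w' with hk_def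
  have hkw_top : Ge ^ w ≠ ⊤ := ENNReal.rpow_ne_top_of_nonneg hw.le hqtop
  have hkw'_top : Be ^ w' ≠ ⊤ := ENNReal.rpow_ne_top_of_nonneg hw'.le hptop
  have hkw_0 : Ge ^ w ≠ 0 := by
    simp only [ne_eq, ENNReal.rpow_eq_zero_iff, not_or]
    exact ⟨fun h => hGe0 h.1, fun h => hqtop h.1⟩
  have hkw'_0 : Be ^ w' ≠ 0 := by
    simp only [ne_eq, ENNReal.rpow_eq_zero_iff, not_or]
    exact ⟨fun h => hBe0 h.1, fun h => hptop h.1⟩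
  have hk_top : k ≠ ⊤ := ENNReal.mul_ne_top hkw_top hkw'_top
  have hk0 : k ≠ 0 := mul_ne_zero hkw_0 hkw'_0
  -- Ae = k
  have hAek : Ae = k := by
    rw [← ENNReal.toReal_eq_toReal_iff' hAtop hk_top]
    rw [heq, hk_def, ENNReal.toReal_mul, ← ENNReal.toReal_rpow, ← ENNReal.toReal_rpow]
  -- the normalized functions
  set F₁ : X → ℝ≥0∞ := fun x => Ge⁻¹ * (q x : ℝ≥0∞) ^ (1+γ) with hF₁_def
  set F₂ : X → ℝ≥0∞ := fun x => Be⁻¹ * (p x : ℝ≥0∞) ^ (1+γ) with hF₂_def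
  have hF₁m : Measurable F₁ := measurable_const.mul (hqm.coe_nnreal_ennreal.pow_const _)
  have hF₂m : Measurable F₂ := measurable_const.mul (hpm.coe_nnreal_ennreal.pow_const _)
  have hF₁top : ∀ x, F₁ x ≠ ⊤ := fun x => ENNReal.mul_ne_top (ENNReal.inv_ne_top.2 hGe0)
    (ENNReal.rpow_ne_top_of_nonneg h1γ.le ENNReal.coe_ne_top)
  have hF₂top : ∀ x, F₂ x ≠ ⊤ := fun x => ENNReal.mul_ne_top (ENNReal.inv_ne_top.2 hBe0)
    (ENNReal.rpow_ne_top_of_nonneg h1γ.le ENNReal.coe_ne_top)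
  have hF1w : ∀ x, F₁ x ^ w = (Ge ^ w)⁻¹ * (q x : ℝ≥0∞) := by
    intro x
    rw [hF₁_def]
    rw [ENNReal.mul_rpow_of_nonneg _ _ hw.le, ENNReal.inv_rpow, ← ENNReal.rpow_mul,
      hmul_w, ENNReal.rpow_one]
  have hF2w : ∀ x, F₂ x ^ w = (Be ^ w)⁻¹ * (p x : ℝ≥0∞) := by
    intro x
    rw [hF₂_def]
    rw [ENNReal.mul_rpow_of_nonneg _ _ hw.le, ENNReal.inv_rpow, ← ENNReal.rpow_mul,
      hmul_w, ENNReal.rpow_one]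
  have hF2w' : ∀ x, F₂ x ^ w' = (Be ^ w')⁻¹ * (p x : ℝ≥0∞) ^ γ := by
    intro x
    rw [hF₂_def]
    rw [ENNReal.mul_rpow_of_nonneg _ _ hw'.le, ENNReal.inv_rpow, ← ENNReal.rpow_mul,
      hmul_w']
  have hφeq : ∀ x, F₁ x ^ w * F₂ x ^ w' = k⁻¹ * ((q x : ℝ≥0∞) * (p x : ℝ≥0∞) ^ γ) := by
    intro x
    rw [hF1w, hF2w', hk_def, ENNReal.mul_inv (Or.inl hkw_0) (Or.inl hkw_top)]
    ring
  -- integral of geometric side is 1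
  have hIφ : (∫⁻ x, F₁ x ^ w * F₂ x ^ w' ∂ν) = 1 := by
    calc (∫⁻ x, F₁ x ^ w * F₂ x ^ w' ∂ν)
        = ∫⁻ x, k⁻¹ * ((q x : ℝ≥0∞) * (p x : ℝ≥0∞) ^ γ) ∂ν := lintegral_congr hφeq
      _ = k⁻¹ * Ae := lintegral_const_mul' _ _ (ENNReal.inv_ne_top.2 hk0)
      _ = 1 := by rw [hAek, ENNReal.inv_mul_cancel hk0 hk_top]
  have hIF₁ : (∫⁻ x, F₁ x ∂ν) = 1 := by
    rw [hF₁_def, lintegral_const_mul' _ _ (ENNReal.inv_ne_top.2 hGe0),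
      ← hGe_def, ENNReal.inv_mul_cancel hGe0 hqtop]
  have hIF₂ : (∫⁻ x, F₂ x ∂ν) = 1 := by
    rw [hF₂_def, lintegral_const_mul' _ _ (ENNReal.inv_ne_top.2 hBe0),
      ← hBe_def, ENNReal.inv_mul_cancel hBe0 hptop]
  have hIΦ : (∫⁻ x, ENNReal.ofReal w * F₁ x + ENNReal.ofReal w' * F₂ x ∂ν) = 1 := by
    rw [lintegral_add_left (hF₁m.const_mul _),
      lintegral_const_mul' _ _ ENNReal.ofReal_ne_top,
      lintegral_const_mul' _ _ ENNReal.ofReal_ne_top, hIF₁, hIF₂, mul_one, mul_one,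
      ← ENNReal.ofReal_add hw.le hw'.le, hww, ENNReal.ofReal_one]
  have hle : ∀ x, F₁ x ^ w * F₂ x ^ w' ≤ ENNReal.ofReal w * F₁ x + ENNReal.ofReal w' * F₂ x :=
    fun x => ennreal_amgm hw.le hw'.le hww (hF₁top x) (hF₂top x)
  have haeq : (fun x => F₁ x ^ w * F₂ x ^ w') =ᵐ[ν]
      (fun x => ENNReal.ofReal w * F₁ x + ENNReal.ofReal w' * F₂ x) := by
    apply ae_eq_of_ae_le_of_lintegral_le (ae_of_all _ hle)
    · rw [hIφ]; exact ENNReal.one_ne_top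
    · exact ((measurable_const.mul hF₁m).add (measurable_const.mul hF₂m)).aemeasurable
    · rw [hIφ, hIΦ]
  have hF12 : F₁ =ᵐ[ν] F₂ :=
    haeq.mono fun x hx => ennreal_amgm_eq hw hw' hww (hF₁top x) (hF₂top x) hx
  -- take w-th power of the equality and integrate
  have hqp : (fun x => (Ge ^ w)⁻¹ * (q x : ℝ≥0∞)) =ᵐ[ν]
      (fun x => (Be ^ w)⁻¹ * (p x : ℝ≥0∞)) := by
    refine hF12.mono fun x hx => ?_
    show (Ge ^ w)⁻¹ * (q x : ℝ≥0∞) = (Be ^ w)⁻¹ * (p x : ℝ≥0∞)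
    rw [← hF1w, ← hF2w, hx]
  have hBw_top : Be ^ w ≠ ⊤ := ENNReal.rpow_ne_top_of_nonneg hw.le hptop
  have hGw_0 : Ge ^ w ≠ 0 := hkw_0
  have hBw_0 : Be ^ w ≠ 0 := by
    simp only [ne_eq, ENNReal.rpow_eq_zero_iff, not_or]
    exact ⟨fun h => hBe0 h.1, fun h => hptop h.1⟩
  have hconst : (Ge ^ w)⁻¹ = (Be ^ w)⁻¹ := by
    have hint := lintegral_congr_ae hqp
    rwa [lintegral_const_mul' _ _ (ENNReal.inv_ne_top.2 hGw_0),
      lintegral_const_mul' _ _ (ENNReal.inv_ne_top.2 hBw_0), hq1, hp1,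
      mul_one, mul_one] at hint
  refine hqp.mono fun x hx => ?_
  rw [hconst] at hx
  have hcancel : (p x : ℝ≥0∞) = (q x : ℝ≥0∞) := by
    have h0 : (Be ^ w)⁻¹ ≠ 0 := ENNReal.inv_ne_zero.2 hBw_top
    have ht : (Be ^ w)⁻¹ ≠ ⊤ := ENNReal.inv_ne_top.2 hBw_0
    exact (ENNReal.mul_right_inj h0 ht).1 hx.symm
  exact_mod_cast hcancel.symm

theorem composite_score_strictly_proper {X : Type*} [MeasurableSpace X] (ν : Measure X)
    (γ c : ℝ) (hγ : 0 < γ) (hc : 0 < c)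
    (u : ℝ → ℝ) (hupos : ∀ z : ℝ, 0 < z → 0 < u z)
    (hψm : StrictMono (fun z : ℝ => Real.log (u (Real.exp z))))
    (hψc : ConvexOn ℝ Set.univ (fun z : ℝ => Real.log (u (Real.exp z))))
    (η : ℝ → ℝ) (hη1 : η 1 = -1) (hη : ∀ z : ℝ, 0 ≤ z → η z ≥ -z ^ (1 + γ)) :
    (∀ g f : X → NNReal, MemF ν γ g → MemF ν γ f →
      (∫⁻ x, (g x : ENNReal) * (f x : ENNReal) ^ γ ∂ν) ≠ 0 →
      compositeScore ν γ c η u g g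
          = -(u (c * (∫⁻ x, (g x : ENNReal) ^ (1 + γ) ∂ν).toReal)) ∧
        compositeScore ν γ c η u g f ≥ compositeScore ν γ c η u g g) ∧
    (∀ q p : X → NNReal, MemF ν γ q → MemF ν γ p →
      (∫⁻ x, (q x : ENNReal) ∂ν) = 1 → (∫⁻ x, (p x : ENNReal) ∂ν) = 1 →
      (∫⁻ x, (q x : ENNReal) * (p x : ENNReal) ^ γ ∂ν) ≠ 0 →
      (compositeScore ν γ c η u q p = compositeScore ν γ c η u q q ↔ q =ᵐ[ν] p)) := by
  constructor
  · intro g f hg hf hA0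
    obtain ⟨h1, h2, _⟩ := score_ineq ν γ c hγ hc u hupos hψm hψc η hη1 hη hg hf hA0
    exact ⟨h1, h2⟩
  · intro q p hq hp hq1 hp1 hA0
    constructor
    · intro heqS
      obtain ⟨_, _, h3⟩ := score_ineq ν γ c hγ hc u hupos hψm hψc η hη1 hη hq hp hA0
      refine holder_eq_ae hγ hq.1 hp.1 hq.2.1 hp.2.1 hq.2.2 hp.2.2 hq1 hp1 ?_ (h3 heqS)
      exact ne_top_of_le_ne_top (ENNReal.mul_ne_top
        (ENNReal.rpow_ne_top_of_nonneg (by positivity) hq.2.2)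
        (ENNReal.rpow_ne_top_of_nonneg (by positivity) hp.2.2))
        (lintegral_holder hγ hq.1 hp.1)
    · intro hqp
      have hInt1 : (∫⁻ x, (q x : ℝ≥0∞) * (p x : ℝ≥0∞) ^ γ ∂ν)
          = ∫⁻ x, (q x : ℝ≥0∞) * (q x : ℝ≥0∞) ^ γ ∂ν := by
        refine lintegral_congr_ae ?_
        filter_upwards [hqp] with x hx
        rw [hx]
      have hInt2 : (∫⁻ x, (p x : ℝ≥0∞) ^ (1 + γ) ∂ν)
          = ∫⁻ x, (q x : ℝ≥0∞) ^ (1 + γ) ∂ν := by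
        refine lintegral_congr_ae ?_
        filter_upwards [hqp] with x hx
        rw [hx]
      rw [compositeScore, compositeScore, hInt1, hInt2]
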